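/- arXiv:math/9905119 — 2 statements merged into one kernel-verified Lean document; each statement's English description precedes it below -/
import Mathlib

section
/- Every non-principal ultrafilter on ℕ is non-meager as a subset of Cantor space; consequently, for every non-principal ultrafilter U, player ONE does not have a winning strategy in the game G1(U), and since TWO also has no winning strategy, G1(U) is undetermined. -/
open Filter Set

/-- A strategy: maps finite sequences of the opponent's moves to a natural number. -/
abbrev Strat := List ℕ → ℕ

/-- TWO's move in inning `k` (0-indexed) when following strategy `σ` against ONE's
moves `m`: TWO has seen `m 0, …, m k`. -/
def twoFollow (σ : Strat) (m : ℕ → ℕ) (k : ℕ) : ℕ :=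
  σ (List.ofFn fun i : Fin (k + 1) => m i)

/-- ONE's move in inning `k` when following strategy `σ` against TWO's moves `n`:
ONE's move depends on `n 0, …, n (k-1)` (the first move is `σ []`). -/
def oneFollow (σ : Strat) (n : ℕ → ℕ) (k : ℕ) : ℕ :=
  σ (List.ofFn fun i : Fin k => n i)

/-- TWO wins the play `(m 0, n 0, m 1, n 1, …)` of the game `G1(F)`. -/
def TwoWins1 (F : Set (Set ℕ)) (m n : ℕ → ℕ) : Prop :=
  StrictMono n ∧ (∀ N : ℕ, ∃ k, N ≤ k ∧ m k < n k) ∧ Set.range n ∈ F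

/-- TWO wins the play `(m 0, n 0, m 1, n 1, …)` of the game `G2(F)`. -/
def TwoWins2 (F : Set (Set ℕ)) (m n : ℕ → ℕ) : Prop :=
  (∀ᶠ k in Filter.atTop, m k < n k) ∧ Set.range n ∈ F

/-- `σ` is a winning strategy for TWO in `G1(F)`. -/
def TwoWinning1 (F : Set (Set ℕ)) (σ : Strat) : Prop :=
  ∀ m : ℕ → ℕ, TwoWins1 F m (twoFollow σ m)

/-- `σ` is a winning strategy for ONE in `G1(F)`. -/
def OneWinning1 (F : Set (Set ℕ)) (σ : Strat) : Prop :=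
  ∀ n : ℕ → ℕ, ¬ TwoWins1 F (oneFollow σ n) n

/-- `σ` is a winning strategy for TWO in `G2(F)`. -/
def TwoWinning2 (F : Set (Set ℕ)) (σ : Strat) : Prop :=
  ∀ m : ℕ → ℕ, TwoWins2 F m (twoFollow σ m)

/-- `σ` is a winning strategy for ONE in `G2(F)`. -/
def OneWinning2 (F : Set (Set ℕ)) (σ : Strat) : Prop :=
  ∀ n : ℕ → ℕ, ¬ TwoWins2 F (oneFollow σ n) n

/-- `F` is a non-principal filter on `ℕ`: upward closed, closed under finite
intersections, and every member is infinite. -/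
def IsNPFilter (F : Set (Set ℕ)) : Prop :=
  (∀ X ∈ F, ∀ Y : Set ℕ, X ⊆ Y → Y ∈ F) ∧
  (∀ X ∈ F, ∀ Y ∈ F, X ∩ Y ∈ F) ∧
  (∀ X ∈ F, X.Infinite)

/-- `F` is a rare filter: every partition of `ℕ` into disjoint (nonempty) finite sets
admits a selector in `F`. -/
def IsRare (F : Set (Set ℕ)) : Prop :=
  ∀ I : ℕ → Set ℕ, (∀ n, (I n).Finite) → (∀ n, (I n).Nonempty) →
    (Pairwise fun i j => Disjoint (I i) (I j)) → (⋃ n, I n) = Set.univ →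
    ∃ X ∈ F, ∀ n, (X ∩ I n).Subsingleton

/-- The subset of Cantor space `2^ℕ` corresponding to the filter `F`. -/
def cantorCoded (F : Set (Set ℕ)) : Set (ℕ → Bool) :=
  {χ | {n | χ n = true} ∈ F}

/-- The increasing enumeration of `X ⊆ ℕ`. -/
noncomputable def enum (X : Set ℕ) : ℕ → ℕ := Nat.nth (· ∈ X)

/-- `g` eventually dominates `f`. -/
def EvDom (g f : ℕ → ℕ) : Prop := ∀ᶠ k in Filter.atTop, f k < g k

/-! ### Auxiliary lemmas -/

section Aux

variable {U : Set (Set ℕ)}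

lemma IsNPFilter.not_compl_mem (hU : IsNPFilter U) {X : Set ℕ} (hX : X ∈ U) : Xᶜ ∉ U := by
  intro h
  have h2 := hU.2.2 _ (hU.2.1 _ hX _ h)
  rw [Set.inter_compl_self] at h2
  exact (Set.not_infinite.mpr Set.finite_empty) h2

/-- The flip homeomorphism of Cantor space. -/
def flipHomeo : (ℕ → Bool) ≃ₜ (ℕ → Bool) :=
  Homeomorph.piCongrRight fun _ =>
    { toFun := not, invFun := not,
      left_inv := Bool.not_not, right_inv := Bool.not_not,
      continuous_toFun := continuous_of_discreteTopology,
      continuous_invFun := continuous_of_discreteTopology }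

/-- Part 1: a non-principal ultrafilter is non-meager in Cantor space. -/
lemma nonmeager_of_ultra (hU : IsNPFilter U)
    (hultra : ∀ X : Set ℕ, X ∈ U ∨ Xᶜ ∈ U) :
    ¬ IsMeagre (cantorCoded U) := by
  intro hm
  have hpre : (⇑flipHomeo) ⁻¹' (cantorCoded U) = (cantorCoded U)ᶜ := by
    ext χ
    have h1 : {n | ((flipHomeo : (ℕ → Bool) → (ℕ → Bool)) χ) n = true} = {n | χ n = true}ᶜ := by
      ext n
      simp [flipHomeo, Homeomorph.piCongrRight]
    simp only [Set.mem_preimage, cantorCoded, Set.mem_setOf_eq, Set.mem_compl_iff, h1]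
    constructor
    · exact fun h h' => hU.not_compl_mem h' h
    · intro h
      rcases hultra {n | χ n = true} with h' | h'
      · exact absurd h' h
      · exact h'
  have h2 : IsMeagre ((cantorCoded U)ᶜ) := by
    rw [← hpre]
    exact hm.preimage_of_isOpenMap flipHomeo.continuous flipHomeo.isOpenMap
  have huniv : IsMeagre (univ : Set (ℕ → Bool)) := by
    have : IsMeagre (cantorCoded U ∪ (cantorCoded U)ᶜ) := by
      unfold IsMeagre at *
      rw [Set.compl_union]
      exact Filter.inter_mem hm h2
    rwa [Set.union_compl_self] at this
  have hd : Dense ((univ : Set (ℕ → Bool))ᶜ) := dense_of_mem_residual huniv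
  rw [Set.compl_univ] at hd
  exact (dense_iff_inter_open.mp hd univ isOpen_univ ⟨fun _ => true, trivial⟩).elim
      (fun x hx => hx.2)

/-- Lemma B: if every member of `U` meets almost every interval of the partition
determined by `k`, then the coded set is meagre. -/
lemma meagre_of_meets (U : Set (Set ℕ)) (k : ℕ → ℕ) (hk : StrictMono k)
    (H : ∀ X ∈ U, ∀ᶠ j in atTop, (X ∩ Set.Ico (k j) (k (j+1))).Nonempty) :
    IsMeagre (cantorCoded U) := by
  set C : ℕ → Set (ℕ → Bool) :=
    fun N => {χ | ∀ j, N ≤ j → ∃ i ∈ Set.Ico (k j) (k (j+1)), χ i = true} with hC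
  have hclosed : ∀ N, IsClosed (C N) := by
    intro N
    have : C N = ⋂ j, ⋂ (_ : N ≤ j), ⋃ i ∈ Set.Ico (k j) (k (j+1)),
        {χ : ℕ → Bool | χ i = true} := by
      ext χ; simp [hC]
    rw [this]
    refine isClosed_iInter fun j => isClosed_iInter fun _ => ?_
    refine (Set.finite_Ico _ _).isClosed_biUnion fun i _ => ?_
    show IsClosed ((fun χ : ℕ → Bool => χ i) ⁻¹' {true})
    exact IsClosed.preimage (continuous_apply i) isClosed_singleton
  have hint : ∀ N, interior (C N) = ∅ := by
    intro N
    by_contra h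
    rcases Set.nonempty_iff_ne_empty.mpr h with ⟨x, hx⟩
    rcases (isOpen_pi_iff.mp isOpen_interior) x hx with ⟨I, u, hIu, hsub⟩
    set j := max N ((I.sup id) + 1) with hj
    have hNj : N ≤ j := le_max_left _ _
    have hIj : ∀ a ∈ I, a < k j := by
      intro a ha
      have h1 : a ≤ I.sup id := Finset.le_sup (f := id) ha
      have h2 : a < j := lt_of_le_of_lt h1 (lt_of_lt_of_le (Nat.lt_succ_self _) (le_max_right _ _))
      exact lt_of_lt_of_le h2 hk.le_apply
    set χ' : ℕ → Bool := fun i => if i ∈ Set.Ico (k j) (k (j+1)) then false else x i with hχ'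
    have hmem : χ' ∈ (I : Set ℕ).pi u := by
      intro a ha
      have hna : a ∉ Set.Ico (k j) (k (j+1)) := by
        intro hc
        exact absurd hc.1 (not_le.mpr (hIj a ha))
      have : χ' a = x a := if_neg hna
      rw [this]
      exact (hIu a ha).2
    have hC' : χ' ∈ C N := interior_subset (hsub hmem)
    rcases hC' j hNj with ⟨i, hi, hit⟩
    have : χ' i = false := if_pos hi
    rw [this] at hit
    exact absurd hit (by simp)
  refine isMeagre_iff_countable_union_isNowhereDense.mpr
    ⟨Set.range C, ?_, Set.countable_range _, ?_⟩
  · rintro t ⟨N, rfl⟩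
    exact ((hclosed N).isNowhereDense_iff).mpr (hint N)
  · intro χ hχ
    rcases (Filter.eventually_atTop).mp (H _ hχ) with ⟨N, hN⟩
    refine Set.mem_sUnion.mpr ⟨C N, ⟨N, rfl⟩, ?_⟩
    intro j hj
    rcases hN j hj with ⟨i, hiX, hiI⟩
    exact ⟨i, hiI, hiX⟩

/-- strictly increasing lists of numbers `< n` are sublists of `range n` -/
lemma sublist_range_of_pairwise (l : List ℕ) (hp : l.Pairwise (· < ·)) :
    ∀ n, (∀ x ∈ l, x < n) → l.Sublist (List.range n) := by
  induction l using List.reverseRecOn with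
  | nil => intro n _; exact (List.nil_sublist _)
  | append_singleton l' a ih =>
    intro n hbd
    rw [List.pairwise_append] at hp
    have ha : a < n := hbd a (by simp)
    have h1 : l'.Sublist (List.range a) := by
      refine ih hp.1 a fun x hx => ?_
      exact hp.2.2 x hx a (by simp)
    have h2 : (l' ++ [a]).Sublist (List.range a ++ [a]) :=
      h1.append (List.Sublist.refl _)
    rw [← List.range_succ] at h2
    exact h2.trans (List.range_sublist.mpr ha)

lemma le_foldr_max (L : List ℕ) (a : ℕ) (h : a ∈ L) : a ≤ L.foldr max 0 := by
  induction L with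
  | nil => simp at h
  | cons b L ih =>
    rcases List.mem_cons.mp h with rfl | h'
    · exact le_max_left _ _
    · exact le_trans (ih h') (le_max_right _ _)

/-- bound for values of `σ` on strictly increasing lists with entries `< b` -/
def stratBnd (σ : Strat) (b : ℕ) : ℕ :=
  (((List.range b).sublists).map σ).foldr max 0

lemma le_stratBnd (σ : Strat) (b : ℕ) (l : List ℕ)
    (hl : l.Sublist (List.range b)) : σ l ≤ stratBnd σ b :=
  le_foldr_max _ _ (List.mem_map.mpr ⟨l, List.mem_sublists.mpr hl, rfl⟩)

/-- the interval partition adapted to a strategy of ONE -/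
def kpart (σ : Strat) : ℕ → ℕ
  | 0 => 0
  | j+1 => kpart σ j + 1 + stratBnd σ (kpart σ j)

lemma kpart_strictMono (σ : Strat) : StrictMono (kpart σ) := by
  apply strictMono_nat_of_lt_succ
  intro n
  show kpart σ n < kpart σ n + 1 + stratBnd σ (kpart σ n)
  omega

/-- Part 2: ONE has no winning strategy in `G1(U)` when `U` is non-meager. -/
lemma no_one_winning (hU : IsNPFilter U)
    (hultra : ∀ X : Set ℕ, X ∈ U ∨ Xᶜ ∈ U) :
    ¬ ∃ σ : Strat, OneWinning1 U σ := by
  classical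
  rintro ⟨σ, hσ⟩
  set k := kpart σ with hkdef
  have hmono := kpart_strictMono σ
  have hmeet : ¬ ∀ X ∈ U, ∀ᶠ j in atTop, (X ∩ Set.Ico (k j) (k (j+1))).Nonempty := by
    intro h
    exact nonmeager_of_ultra hU hultra (meagre_of_meets U k hmono h)
  push_neg at hmeet
  obtain ⟨X, hXU, hev⟩ := hmeet
  have hev : ∃ᶠ j in atTop, ¬ (X ∩ Set.Ico (k j) (k (j+1))).Nonempty :=
    hev.mono fun j h => by rw [h]; exact Set.not_nonempty_empty
  have hXinf : X.Infinite := hU.2.2 X hXU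
  set p := fun a => a ∈ X with hp
  have hsp : (setOf p).Infinite := by
    have : setOf p = X := Set.setOf_mem_eq
    rw [this]; exact hXinf
  set n := Nat.nth p with hn
  apply hσ n
  refine ⟨Nat.nth_strictMono hsp, ?_, ?_⟩
  · intro N
    obtain ⟨j, hjge, hjempty⟩ := (Filter.frequently_atTop.mp hev) (n N + 1)
    have hkj : n N < k j :=
      lt_of_lt_of_le (Nat.lt_of_succ_le hjge) hmono.le_apply
    set c := Nat.count p (k j) with hc
    have hNc : N < c := (Nat.lt_nth_iff_count_lt hsp).mpr hkj
    refine ⟨c, le_of_lt hNc, ?_⟩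
    have hlist : ∀ i : Fin c, n i < k j :=
      fun i => (Nat.lt_nth_iff_count_lt hsp).mp i.2
    have hsub : (List.ofFn fun i : Fin c => n i).Sublist (List.range (k j)) := by
      apply sublist_range_of_pairwise
      · rw [List.pairwise_ofFn]
        intro i j' hij
        exact (Nat.nth_strictMono hsp) hij
      · intro x hx
        obtain ⟨i, rfl⟩ := List.mem_ofFn.mp hx
        exact hlist i
    have hb : σ (List.ofFn fun i : Fin c => n i) ≤ stratBnd σ (k j) := le_stratBnd _ _ _ hsub
    have hnc : k (j+1) ≤ n c := by
      have h1 : k j ≤ n c := (Nat.count_le_iff_le_nth hsp).mp (le_refl c)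
      have h2 : n c ∈ X := Nat.nth_mem_of_infinite hsp c
      by_contra hcon
      push_neg at hcon
      exact hjempty ⟨n c, h2, Set.mem_Ico.mpr ⟨h1, hcon⟩⟩
    show σ (List.ofFn fun i : Fin c => n i) < n c
    have hlt : stratBnd σ (k j) < k (j+1) := by
      show stratBnd σ (k j) < k j + 1 + stratBnd σ (k j)
      omega
    omega
  · rw [Nat.range_nth_of_infinite hsp]
    exact hXU

end Aux

namespace P3

/-- takes of a prefix agree -/
lemma take_eq_of_prefix {l₁ l₂ : List ℕ} (h : l₁ <+: l₂) {n : ℕ} (hn : n ≤ l₁.length) :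
    l₂.take n = l₁.take n := by
  apply List.ext_getElem
  · rw [List.length_take, List.length_take]
    have := h.length_le
    omega
  · intro i h₁ h₂
    rw [List.getElem_take, List.getElem_take]
    exact (h.getElem (by rw [List.length_take] at h₂; omega)).symm

/-- the play determined by a chain of lists -/
def playOf (c : ℕ → List ℕ) : ℕ → ℕ := fun k => (c (k+1)).getD k 0

lemma ofFn_playOf (c : ℕ → List ℕ) (hc : ∀ j, c j <+: c (j+1))
    (hlen : ∀ k, k < (c (k+1)).length) (k : ℕ) :
    (List.ofFn fun i : Fin (k+1) => playOf c i) = (c (k+1)).take (k+1) := by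
  have hchain : ∀ j j', j ≤ j' → c j <+: c j' := by
    intro j j' hjj
    induction j' with
    | zero => cases Nat.le_zero.mp hjj; exact List.prefix_refl _
    | succ n ih =>
      rcases Nat.lt_or_ge j (n+1) with h | h
      · exact (ih (by omega)).trans (hc n)
      · have : j = n + 1 := by omega
        subst this; exact List.prefix_refl _
  apply List.ext_getElem
  · simp only [List.length_ofFn, List.length_take]
    have := hlen k
    omega
  · intro i h₁ h₂
    simp only [List.length_ofFn] at h₁
    rw [List.getElem_ofFn, List.getElem_take]
    show playOf c i = _
    unfold playOf
    rw [List.getD_eq_getElem _ _ (hlen i)]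
    exact (hchain (i+1) (k+1) (by omega)).getElem (hlen i)

lemma twoFollow_playOf (σ : Strat) (c : ℕ → List ℕ) (hc : ∀ j, c j <+: c (j+1))
    (hlen : ∀ k, k < (c (k+1)).length) (k : ℕ) :
    twoFollow σ (playOf c) k = σ ((c (k+1)).take (k+1)) := by
  unfold twoFollow
  rw [ofFn_playOf c hc hlen k]

/-- one-step monotonicity of a winning strategy's responses -/
lemma resp_mono {U : Set (Set ℕ)} {σ : Strat} (hσ : TwoWinning1 U σ)
    (t : List ℕ) (ht : t ≠ []) (m : ℕ) : σ t < σ (t ++ [m]) := by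
  set l := t ++ [m] with hl
  set c : ℕ → List ℕ := fun j => l ++ List.replicate j 0 with hcdef
  have hc : ∀ j, c j <+: c (j+1) := by
    intro j
    simp only [hcdef]
    refine ⟨[0], ?_⟩
    rw [List.append_assoc]
    congr 1
    rw [← List.replicate_succ']
  have hlen : ∀ k, k < (c (k+1)).length := by
    intro k
    simp only [hcdef, List.length_append, List.length_replicate]
    omega
  have hmono := (hσ (playOf c)).1
  have htl : 1 ≤ t.length := by
    cases t with
    | nil => exact absurd rfl ht
    | cons a l' => simp
  have key := hmono (show t.length - 1 < t.length by omega)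
  rw [twoFollow_playOf σ c hc hlen, twoFollow_playOf σ c hc hlen] at key
  have h1 : (c (t.length - 1 + 1)).take (t.length - 1 + 1) = t := by
    have : t.length - 1 + 1 = t.length := by omega
    rw [this]
    show (l ++ List.replicate t.length 0).take t.length = t
    rw [hl, List.append_assoc]
    exact List.take_left
  have h2 : (c (t.length + 1)).take (t.length + 1) = l := by
    simp only [hcdef]
    rw [List.take_append_of_le_length (by simp [hl])]
    apply List.take_of_length_le
    simp [hl]
  rw [h1, h2] at key
  exact key

/-- responses along a chain from `t` are at least `σ t` -/
lemma resp_chain_le {U : Set (Set ℕ)} {σ : Strat} (hσ : TwoWinning1 U σ)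
    (t : List ℕ) (ht : t ≠ []) (u : List ℕ) (hpre : t <+: u) :
    ∀ i, t.length ≤ i + 1 → i + 1 ≤ u.length → σ t ≤ σ (u.take (i+1)) := by
  intro i
  induction i with
  | zero =>
    intro h1 h2
    have htl : 1 ≤ t.length := by
      cases t with
      | nil => exact absurd rfl ht
      | cons a l' => simp
    have : t.length = 1 := by omega
    have htake : u.take 1 = t := by
      rw [take_eq_of_prefix hpre (by omega), ← this, List.take_length]
    rw [htake]
  | succ n ih =>
    intro h1 h2
    rcases Nat.lt_or_ge (t.length) (n+2) with h | h
    · -- use one-step from u.take (n+1)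
      have hn1 : t.length ≤ n + 1 := by omega
      have hn2 : n + 1 ≤ u.length := by omega
      have hstep : u.take (n+2) = u.take (n+1) ++ [u[n+1]'(by omega)] := by
        rw [List.take_succ]
        congr 1
        rw [List.getElem?_eq_getElem (by omega)]
        rfl
      have hne : u.take (n+1) ≠ [] := by
        have : (u.take (n+1)).length = n+1 := by
          rw [List.length_take]; omega
        intro hcon
        rw [hcon] at this
        simp at this
      have hlt : σ (u.take (n+1)) < σ (u.take (n+2)) := by
        rw [hstep]; exact resp_mono hσ _ hne _
      exact le_of_lt (lt_of_le_of_lt (ih hn1 hn2) hlt)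
    · -- t.length = n+2
      have : t.length = n + 2 := by omega
      have htake : u.take (n+2) = t := by
        rw [take_eq_of_prefix hpre (by omega), ← this, List.take_length]
      rw [htake]


/-- wide node: infinitely many possible next responses -/
def IsWide (σ : Strat) (t : List ℕ) : Prop := (Set.range fun m => σ (t ++ [m])).Infinite

lemma exists_cap {σ : Strat} {t : List ℕ} (h : ¬ IsWide σ t) :
    ∃ B, ∀ m, σ (t ++ [m]) ≤ B := by
  have hfin : (Set.range fun m => σ (t ++ [m])).Finite := Set.not_infinite.mp h
  obtain ⟨B, hB⟩ := hfin.bddAbove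
  exact ⟨B, fun m => hB ⟨m, rfl⟩⟩

open Classical in
noncomputable def capOf (σ : Strat) (t : List ℕ) : ℕ :=
  if h : IsWide σ t then 0 else Classical.choose (exists_cap h)

lemma capOf_spec {σ : Strat} {t : List ℕ} (h : ¬ IsWide σ t) (m : ℕ) :
    σ (t ++ [m]) ≤ capOf σ t := by
  rw [capOf, dif_neg h]
  exact Classical.choose_spec (exists_cap h) m

noncomputable def capSeq (σ : Strat) (t : List ℕ) : ℕ → List ℕ
  | 0 => t
  | j+1 => capSeq σ t j ++ [capOf σ (capSeq σ t j)]

lemma capSeq_length (σ : Strat) (t : List ℕ) (j : ℕ) :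
    (capSeq σ t j).length = t.length + j := by
  induction j with
  | zero => rfl
  | succ n ih => show (capSeq σ t n ++ _).length = _; simp [ih]; omega

lemma capSeq_prefix (σ : Strat) (t : List ℕ) (j : ℕ) :
    capSeq σ t j <+: capSeq σ t (j+1) :=
  ⟨[capOf σ (capSeq σ t j)], rfl⟩

lemma capSeq_prefix_le (σ : Strat) (t : List ℕ) {j j' : ℕ} (h : j ≤ j') :
    capSeq σ t j <+: capSeq σ t j' := by
  induction j' with
  | zero => cases Nat.le_zero.mp h; exact List.prefix_refl _
  | succ n ih =>
    rcases Nat.lt_or_ge j (n+1) with h' | h'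
    · exact (ih (by omega)).trans (capSeq_prefix σ t n)
    · have : j = n+1 := by omega
      subst this; exact List.prefix_refl _

/-- The stuck case: if cap-walking from `t₀` never reaches a wide node, TWO's
strategy loses (it is eventually never beaten). -/
lemma not_stuck {U : Set (Set ℕ)} {σ : Strat} (hσ : TwoWinning1 U σ) (t₀ : List ℕ)
    (hstuck : ∀ j, ¬ IsWide σ (capSeq σ t₀ j)) : False := by
  set c := capSeq σ t₀ with hcdef
  have hc : ∀ j, c j <+: c (j+1) := capSeq_prefix σ t₀
  have hlen : ∀ k, k < (c (k+1)).length := by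
    intro k
    rw [hcdef, capSeq_length]
    omega
  obtain ⟨k, hk, hbeat⟩ := (hσ (playOf c)).2.1 t₀.length
  rw [twoFollow_playOf σ c hc hlen] at hbeat
  -- identify the take with a capSeq element
  set j := k - t₀.length with hj
  have hjk : t₀.length + j = k := by omega
  have htake : (c (k+1)).take (k+1) = c (j+1) := by
    have hpre : c (j+1) <+: c (k+1) := capSeq_prefix_le σ t₀ (by omega)
    have hlenj : (c (j+1)).length = k+1 := by
      rw [hcdef, capSeq_length]; omega
    rw [take_eq_of_prefix hpre (by omega)]
    exact List.take_of_length_le (by omega)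
  rw [htake] at hbeat
  -- the response is at most the cap, which is the move
  have hresp : σ (c (j+1)) ≤ capOf σ (c j) := by
    show σ (c j ++ [capOf σ (c j)]) ≤ capOf σ (c j)
    exact capOf_spec (hstuck j) _
  have hmove : playOf c k = capOf σ (c j) := by
    unfold playOf
    rw [List.getD_eq_getElem _ _ (hlen k)]
    have hpre : c (j+1) <+: c (k+1) := capSeq_prefix_le σ t₀ (by omega)
    have hklt : k < (c (j+1)).length := by rw [hcdef, capSeq_length]; omega
    rw [← hpre.getElem hklt]
    have e : c (j+1) = c j ++ [capOf σ (c j)] := rfl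
    have hcl : (c j).length = k := by rw [hcdef, capSeq_length]; omega
    simp [e, List.getElem_append, hcl]
  rw [hmove] at hbeat
  omega

section Main

variable {U : Set (Set ℕ)} {σ : Strat}

lemma exists_jump {t : List ℕ} (h : IsWide σ t) (τ : ℕ) : ∃ m, τ < σ (t ++ [m]) := by
  obtain ⟨b, hbmem, hb⟩ := Set.Infinite.exists_gt h τ
  obtain ⟨m, rfl⟩ := hbmem
  exact ⟨m, hb⟩

open Classical in
noncomputable def jumpOf (σ : Strat) (t : List ℕ) (τ : ℕ) : ℕ :=
  if h : IsWide σ t then Classical.choose (exists_jump h τ) else 0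

lemma jumpOf_spec {t : List ℕ} (h : IsWide σ t) (τ : ℕ) :
    τ < σ (t ++ [jumpOf σ t τ]) := by
  classical
  rw [jumpOf, dif_pos h]
  exact Classical.choose_spec (exists_jump h τ)

/-- the set of response values along a finite position -/
def valSet (σ : Strat) (l : List ℕ) : Finset ℕ :=
  (Finset.range l.length).image (fun i => σ (l.take (i+1)))

noncomputable def tau (σ : Strat) (a b : List ℕ) : ℕ :=
  ((valSet σ a) ∪ (valSet σ b)).sup id

lemma le_tau_left {a b : List ℕ} {i : ℕ} (h : i < a.length) :
    σ (a.take (i+1)) ≤ tau σ a b :=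
  Finset.le_sup (f := id)
    (Finset.mem_union_left _ (Finset.mem_image.mpr ⟨i, Finset.mem_range.mpr h, rfl⟩))

lemma le_tau_right {a b : List ℕ} {i : ℕ} (h : i < b.length) :
    σ (b.take (i+1)) ≤ tau σ a b :=
  Finset.le_sup (f := id)
    (Finset.mem_union_right _ (Finset.mem_image.mpr ⟨i, Finset.mem_range.mpr h, rfl⟩))

lemma valSet_mono {a a' : List ℕ} (h : a <+: a') : valSet σ a ⊆ valSet σ a' := by
  intro x hx
  obtain ⟨i, hi, rfl⟩ := Finset.mem_image.mp hx
  rw [Finset.mem_range] at hi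
  refine Finset.mem_image.mpr ⟨i, Finset.mem_range.mpr (by have := h.length_le; omega), ?_⟩
  rw [take_eq_of_prefix h (by omega)]

lemma tau_mono {a a' b b' : List ℕ} (ha : a <+: a') (hb : b <+: b') :
    tau σ a b ≤ tau σ a' b' :=
  Finset.sup_mono (Finset.union_subset_union (valSet_mono ha) (valSet_mono hb))

variable (hW : ∀ t, ∃ j, IsWide σ (capSeq σ t j))

open Classical in
noncomputable def exitOf (t : List ℕ) : List ℕ :=
  capSeq σ t (Nat.find (hW t))

lemma exitOf_wide (t : List ℕ) : IsWide σ (exitOf hW t) := by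
  classical
  exact Nat.find_spec (hW t)

lemma exitOf_prefix (t : List ℕ) : t <+: exitOf hW t :=
  capSeq_prefix_le σ t (Nat.zero_le _)

noncomputable def stageExt (t : List ℕ) (τ : ℕ) : List ℕ :=
  exitOf hW (t ++ [jumpOf σ t τ])

lemma stageExt_prefix (t : List ℕ) (τ : ℕ) : t <+: stageExt hW t τ :=
  (List.prefix_append t _).trans (exitOf_prefix hW _)

lemma stageExt_length (t : List ℕ) (τ : ℕ) : t.length < (stageExt hW t τ).length := by
  have := (exitOf_prefix hW (t ++ [jumpOf σ t τ])).length_le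
  simp only [List.length_append, List.length_cons, List.length_nil] at this
  unfold stageExt
  omega

lemma stageExt_wide (t : List ℕ) (τ : ℕ) : IsWide σ (stageExt hW t τ) :=
  exitOf_wide hW _

/-- new values produced in a stage exceed the threshold -/
lemma stageExt_vals_gt (hσ : TwoWinning1 U σ) {t : List ℕ} (hwide : IsWide σ t) (τ : ℕ)
    {i : ℕ} (h1 : t.length ≤ i) (h2 : i < (stageExt hW t τ).length) :
    τ < σ ((stageExt hW t τ).take (i+1)) := by
  set t₁ := t ++ [jumpOf σ t τ] with ht₁
  have hj : τ < σ t₁ := jumpOf_spec hwide τ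
  have hne : t₁ ≠ [] := by simp [ht₁]
  have hpre : t₁ <+: stageExt hW t τ := exitOf_prefix hW t₁
  have hchain := resp_chain_le hσ t₁ hne (stageExt hW t τ) hpre i
      (by simp [ht₁]; omega) (by omega)
  omega

/-- the two-play stage construction -/
noncomputable def st : ℕ → List ℕ × List ℕ
  | 0 => (exitOf hW [], exitOf hW [])
  | k+1 =>
    let a := (st k).1
    let b := (st k).2
    let a' := stageExt hW a (tau σ a b)
    (a', stageExt hW b (tau σ a' b))

lemma st_wide (k : ℕ) : IsWide σ (st hW k).1 ∧ IsWide σ (st hW k).2 := by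
  cases k with
  | zero => exact ⟨exitOf_wide hW [], exitOf_wide hW []⟩
  | succ n => exact ⟨stageExt_wide hW _ _, stageExt_wide hW _ _⟩

lemma st_prefix (k : ℕ) :
    (st hW k).1 <+: (st hW (k+1)).1 ∧ (st hW k).2 <+: (st hW (k+1)).2 :=
  ⟨stageExt_prefix hW _ _, stageExt_prefix hW _ _⟩

lemma st_length (k : ℕ) :
    (st hW k).1.length < (st hW (k+1)).1.length ∧
      (st hW k).2.length < (st hW (k+1)).2.length :=
  ⟨stageExt_length hW _ _, stageExt_length hW _ _⟩

variable (σ)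

/-- abbreviations for the two positions -/
noncomputable def stA (k : ℕ) : List ℕ := (st hW k).1
noncomputable def stB (k : ℕ) : List ℕ := (st hW k).2

noncomputable def tauA (k : ℕ) : ℕ := tau σ (stA σ hW k) (stB σ hW k)
noncomputable def tauB (k : ℕ) : ℕ := tau σ (stA σ hW (k+1)) (stB σ hW k)

variable {σ}

lemma stA_succ (k : ℕ) : stA σ hW (k+1) = stageExt hW (stA σ hW k) (tauA σ hW k) := rfl

lemma stB_succ (k : ℕ) : stB σ hW (k+1) = stageExt hW (stB σ hW k) (tauB σ hW k) := rfl

lemma stAB_zero : stA σ hW 0 = stB σ hW 0 := rfl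

lemma tau_chain1 (k : ℕ) : tauA σ hW k ≤ tauB σ hW k :=
  tau_mono (st_prefix hW k).1 (List.prefix_refl _)

lemma tau_chain2 (k : ℕ) : tauB σ hW k ≤ tauA σ hW (k+1) :=
  tau_mono (List.prefix_refl _) (st_prefix hW k).2

lemma tauA_mono {k k' : ℕ} (h : k ≤ k') : tauA σ hW k ≤ tauA σ hW k' := by
  induction k' with
  | zero => cases Nat.le_zero.mp h; exact le_refl _
  | succ n ih =>
    rcases Nat.lt_or_ge k (n+1) with h' | h'
    · exact le_trans (ih (by omega)) (le_trans (tau_chain1 hW n) (tau_chain2 hW n))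
    · have : k = n+1 := by omega
      subst this; exact le_refl _

/-- interval bounds for the new values of play 1 at stage `k` -/
lemma intervalA (hσ : TwoWinning1 U σ) (k i : ℕ)
    (h1 : (stA σ hW k).length ≤ i) (h2 : i < (stA σ hW (k+1)).length) :
    tauA σ hW k < σ ((stA σ hW (k+1)).take (i+1)) ∧
      σ ((stA σ hW (k+1)).take (i+1)) ≤ tauB σ hW k := by
  constructor
  · rw [stA_succ hW] at h2 ⊢
    exact stageExt_vals_gt hW hσ (st_wide hW k).1 _ h1 h2
  · exact le_tau_left h2

/-- interval bounds for the new values of play 2 at stage `k` -/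
lemma intervalB (hσ : TwoWinning1 U σ) (k i : ℕ)
    (h1 : (stB σ hW k).length ≤ i) (h2 : i < (stB σ hW (k+1)).length) :
    tauB σ hW k < σ ((stB σ hW (k+1)).take (i+1)) ∧
      σ ((stB σ hW (k+1)).take (i+1)) ≤ tauA σ hW (k+1) := by
  constructor
  · rw [stB_succ hW] at h2 ⊢
    exact stageExt_vals_gt hW hσ (st_wide hW k).2 _ h1 h2
  · exact le_tau_right h2

/-- the two stage-values can never coincide -/
lemma cross_ne (hσ : TwoWinning1 U σ) {k k' i i' : ℕ}
    (h1 : (stA σ hW k).length ≤ i) (h2 : i < (stA σ hW (k+1)).length)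
    (h1' : (stB σ hW k').length ≤ i') (h2' : i' < (stB σ hW (k'+1)).length) :
    σ ((stA σ hW (k+1)).take (i+1)) ≠ σ ((stB σ hW (k'+1)).take (i'+1)) := by
  intro heq
  obtain ⟨hlo, hhi⟩ := intervalA hW hσ k i h1 h2
  obtain ⟨hlo', hhi'⟩ := intervalB hW hσ k' i' h1' h2'
  rcases le_or_gt k k' with h | h
  · -- τb k ≤ τb k'
    have : tauB σ hW k ≤ tauB σ hW k' := by
      rcases Nat.eq_or_lt_of_le h with rfl | hlt
      · exact le_refl _
      · exact le_trans (tau_chain2 hW k)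
          (le_trans (tauA_mono hW (by omega)) (tau_chain1 hW k'))
    omega
  · -- k' + 1 ≤ k
    have : tauA σ hW (k'+1) ≤ tauA σ hW k := tauA_mono hW (by omega)
    omega

/-- position lengths grow -/
lemma stA_len_ge (k : ℕ) : k ≤ (stA σ hW k).length := by
  induction k with
  | zero => omega
  | succ n ih =>
    have := (st_length hW n).1
    show n + 1 ≤ (stA σ hW (n+1)).length
    unfold stA at *
    omega

lemma stB_len_ge (k : ℕ) : k ≤ (stB σ hW k).length := by
  induction k with
  | zero => omega
  | succ n ih =>
    have := (st_length hW n).2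
    show n + 1 ≤ (stB σ hW (n+1)).length
    unfold stB at *
    omega

lemma stA_chain {j j' : ℕ} (h : j ≤ j') : stA σ hW j <+: stA σ hW j' := by
  induction j' with
  | zero => cases Nat.le_zero.mp h; exact List.prefix_refl _
  | succ n ih =>
    rcases Nat.lt_or_ge j (n+1) with h' | h'
    · exact (ih (by omega)).trans (st_prefix hW n).1
    · have : j = n+1 := by omega
      subst this; exact List.prefix_refl _

lemma stB_chain {j j' : ℕ} (h : j ≤ j') : stB σ hW j <+: stB σ hW j' := by
  induction j' with
  | zero => cases Nat.le_zero.mp h; exact List.prefix_refl _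
  | succ n ih =>
    rcases Nat.lt_or_ge j (n+1) with h' | h'
    · exact (ih (by omega)).trans (st_prefix hW n).2
    · have : j = n+1 := by omega
      subst this; exact List.prefix_refl _

end Main

/-- Part 3: TWO has no winning strategy in `G1(U)` for a non-principal filter. -/
theorem no_two_winning' (U : Set (Set ℕ)) (hU : IsNPFilter U) :
    ¬ ∃ σ : Strat, TwoWinning1 U σ := by
  classical
  rintro ⟨σ, hσ⟩
  by_cases hW : ∀ t, ∃ j, IsWide σ (capSeq σ t j)
  swap
  · push_neg at hW
    obtain ⟨t₀, h⟩ := hW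
    exact not_stuck hσ t₀ h
  -- main case
  set cA : ℕ → List ℕ := fun j => stA σ hW j with hcA
  set cB : ℕ → List ℕ := fun j => stB σ hW j with hcB
  have hcAc : ∀ j, cA j <+: cA (j+1) := fun j => (st_prefix hW j).1
  have hcBc : ∀ j, cB j <+: cB (j+1) := fun j => (st_prefix hW j).2
  have hlenA : ∀ k, k < (cA (k+1)).length := fun k =>
    lt_of_lt_of_le (by omega) (stA_len_ge hW (k+1))
  have hlenB : ∀ k, k < (cB (k+1)).length := fun k =>
    lt_of_lt_of_le (by omega) (stB_len_ge hW (k+1))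
  -- value formulas
  have hvalA : ∀ i k, i + 1 ≤ (cA k).length →
      twoFollow σ (playOf cA) i = σ ((cA k).take (i+1)) := by
    intro i k hik
    rw [twoFollow_playOf σ cA hcAc hlenA]
    rcases le_or_gt k (i+1) with h | h
    · rw [take_eq_of_prefix (stA_chain hW h) hik]
    · rw [take_eq_of_prefix (stA_chain hW (le_of_lt h))
        (le_trans (by omega) (stA_len_ge hW (i+1)))]
  have hvalB : ∀ i k, i + 1 ≤ (cB k).length →
      twoFollow σ (playOf cB) i = σ ((cB k).take (i+1)) := by
    intro i k hik
    rw [twoFollow_playOf σ cB hcBc hlenB]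
    rcases le_or_gt k (i+1) with h | h
    · rw [take_eq_of_prefix (stB_chain hW h) hik]
    · rw [take_eq_of_prefix (stB_chain hW (le_of_lt h))
        (le_trans (by omega) (stB_len_ge hW (i+1)))]
  -- locate stages
  have hlocA : ∀ i, (cA 0).length ≤ i → ∃ k, (cA k).length ≤ i ∧ i < (cA (k+1)).length := by
    intro i hi
    have hex : ∃ k, i < (cA k).length := ⟨i+1, lt_of_lt_of_le (by omega) (stA_len_ge hW (i+1))⟩
    have hpos : Nat.find hex ≠ 0 := by
      intro hcon
      have hspec := Nat.find_spec hex
      rw [hcon] at hspec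
      omega
    refine ⟨Nat.find hex - 1, ?_, ?_⟩
    · have := Nat.find_min hex (m := Nat.find hex - 1) (by omega)
      omega
    · have hspec := Nat.find_spec hex
      have h1 : Nat.find hex - 1 + 1 = Nat.find hex := by omega
      rw [h1]
      exact hspec
  have hlocB : ∀ i, (cB 0).length ≤ i → ∃ k, (cB k).length ≤ i ∧ i < (cB (k+1)).length := by
    intro i hi
    have hex : ∃ k, i < (cB k).length := ⟨i+1, lt_of_lt_of_le (by omega) (stB_len_ge hW (i+1))⟩
    have hpos : Nat.find hex ≠ 0 := by
      intro hcon
      have hspec := Nat.find_spec hex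
      rw [hcon] at hspec
      omega
    refine ⟨Nat.find hex - 1, ?_, ?_⟩
    · have := Nat.find_min hex (m := Nat.find hex - 1) (by omega)
      omega
    · have hspec := Nat.find_spec hex
      have h1 : Nat.find hex - 1 + 1 = Nat.find hex := by omega
      rw [h1]
      exact hspec
  -- the two ranges
  have hA : Set.range (twoFollow σ (playOf cA)) ∈ U := (hσ (playOf cA)).2.2
  have hB : Set.range (twoFollow σ (playOf cB)) ∈ U := (hσ (playOf cB)).2.2
  have hAB : Set.range (twoFollow σ (playOf cA)) ∩ Set.range (twoFollow σ (playOf cB)) ∈ U :=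
    hU.2.1 _ hA _ hB
  have hinf := hU.2.2 _ hAB
  -- but the intersection is contained in the finite shared prefix values
  have hsub : Set.range (twoFollow σ (playOf cA)) ∩ Set.range (twoFollow σ (playOf cB)) ⊆
      ↑(valSet σ (cA 0)) := by
    rintro v ⟨⟨i, hi⟩, ⟨i', hi'⟩⟩
    by_cases hi0 : i < (cA 0).length
    · rw [← hi, hvalA i 0 (by omega)]
      exact Finset.mem_image.mpr ⟨i, Finset.mem_range.mpr hi0, rfl⟩
    by_cases hi0' : i' < (cB 0).length
    · have hBA : cB 0 = cA 0 := (stAB_zero hW).symm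
      rw [← hi', hvalB i' 0 (by omega), hBA]
      exact Finset.mem_image.mpr ⟨i', Finset.mem_range.mpr (hBA ▸ hi0'), rfl⟩
    · exfalso
      push_neg at hi0 hi0'
      obtain ⟨k, hk1, hk2⟩ := hlocA i hi0
      obtain ⟨k', hk1', hk2'⟩ := hlocB i' hi0'
      have e1 : v = σ ((cA (k+1)).take (i+1)) := by
        rw [← hi, hvalA i (k+1) (by omega)]
      have e2 : v = σ ((cB (k'+1)).take (i'+1)) := by
        rw [← hi', hvalB i' (k'+1) (by omega)]
      exact cross_ne hW hσ hk1 hk2 hk1' hk2' (e1 ▸ e2)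
  exact hinf.mono hsub (Finset.finite_toSet _)

end P3


/-- Part 3: TWO has no winning strategy in `G1(U)`. -/
lemma no_two_winning {U : Set (Set ℕ)} (hU : IsNPFilter U) :
    ¬ ∃ σ : Strat, TwoWinning1 U σ :=
  P3.no_two_winning' U hU

/-- Every non-principal ultrafilter is non-meager; consequently neither player has a
winning strategy in `G1(U)`, so the game is undetermined. -/
theorem stmt17 (U : Set (Set ℕ)) (hU : IsNPFilter U)
    (hultra : ∀ X : Set ℕ, X ∈ U ∨ Xᶜ ∈ U) :
    ¬ IsMeagre (cantorCoded U) ∧ (¬ ∃ σ : Strat, OneWinning1 U σ) ∧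
      (¬ ∃ σ : Strat, TwoWinning1 U σ) :=
  ⟨nonmeager_of_ultra hU hultra, no_one_winning hU hultra, no_two_winning hU⟩
end

section
/- Let {I_n : n ∈ ℕ} be a partition of ℕ into disjoint finite sets, and define a 1-tactic F for ONE by: given TWO's last move k with k ∈ I_n, ONE plays F(k) = max(⋃_{j ≤ n+k} I_j) + n + k + 1. Then in any play (m_1, n_1, m_2, n_2, ...) with m_{k+1} = F(n_k), if m_k < n_k for all but finitely many k, then the set {n_k : k ∈ ℕ} meets all but finitely many blocks I_n in at most one point. -/
open Filter Set

/-- The core of ONE's winning 1-tactic for a non-rare filter: with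
`T k = max (⋃_{j ≤ n+k} I j) + n + k + 1` for `k ∈ I n`, in any play with
`m (k+1) = T (ν k)`, if `m k < ν k` for all but finitely many `k`, then TWO's set of
moves meets all but finitely many blocks in at most one point. -/
theorem stmt19 (I : ℕ → Finset ℕ) (hne : ∀ n, (I n).Nonempty)
    (hdisj : Pairwise fun i j => Disjoint (I i) (I j))
    (hcover : ∀ k : ℕ, ∃ n, k ∈ I n)
    (T : ℕ → ℕ)
    (hT : ∀ k n : ℕ, k ∈ I n →
      T k = (Finset.range (n + k + 1)).sup (fun j => (I j).sup id) + n + k + 1)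
    (m ν : ℕ → ℕ) (hm : ∀ k, m (k + 1) = T (ν k))
    (hdom : ∀ᶠ k in Filter.atTop, m k < ν k) :
    {n : ℕ | ¬ (Set.range ν ∩ ↑(I n)).Subsingleton}.Finite := by
  obtain ⟨K, hK⟩ := Filter.eventually_atTop.1 hdom
  choose b hb using fun k => hcover (ν k)
  have huniq : ∀ k n, ν k ∈ I n → n = b k := by
    intro k n hn
    by_contra h
    exact Finset.disjoint_left.1 (hdisj h) hn (hb k)
  have hkey : ∀ k, K ≤ k → b k < b (k + 1) := by
    intro k hk
    have h1 : m (k + 1) < ν (k + 1) := hK (k + 1) (by omega)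
    rw [hm k, hT (ν k) (b k) (hb k)] at h1
    by_contra h
    push_neg at h
    have h2 : b (k + 1) ∈ Finset.range (b k + ν k + 1) := by
      simp only [Finset.mem_range]; omega
    have h3 : ν (k + 1) ≤ (Finset.range (b k + ν k + 1)).sup (fun j => (I j).sup id) :=
      le_trans (Finset.le_sup (f := id) (hb (k + 1))) (Finset.le_sup (f := fun j => (I j).sup id) h2)
    omega
  have hmono : ∀ k k', K ≤ k → k < k' → b k < b k' := by
    intro k k' hk hkk
    induction k' with
    | zero => omega
    | succ j ih =>
      rcases Nat.lt_succ_iff_lt_or_eq.1 hkk with h | h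
      · exact (ih h).trans (hkey j (by omega))
      · subst h; exact hkey k hk
  apply Set.Finite.subset ((Set.finite_Iio (K + 1)).image b)
  intro n hn
  simp only [Set.mem_setOf_eq, Set.not_subsingleton_iff] at hn
  obtain ⟨x, ⟨⟨k, rfl⟩, hxI⟩, y, ⟨⟨k', rfl⟩, hyI⟩, hxy⟩ := hn
  have hk1 : n = b k := huniq k n hxI
  have hk2 : n = b k' := huniq k' n hyI
  have hkk : k ≠ k' := by rintro rfl; exact hxy rfl
  have : k < K ∨ k' < K := by
    by_contra h
    push_neg at h
    rcases Nat.lt_or_ge k k' with h' | h'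
    · exact absurd (hmono k k' h.1 h') (by omega)
    · exact absurd (hmono k' k h.2 (by omega)) (by omega)
  rcases this with h | h
  · exact ⟨k, by simpa using Nat.lt_succ_of_lt h, hk1.symm⟩
  · exact ⟨k', by simpa using Nat.lt_succ_of_lt h, hk2.symm⟩
end
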